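/- Let F = (F_i, d_i) be a chain complex of functors from abelian groups to abelian groups, each F_i naturally isomorphic to A ↦ ⊕_{j=1}^{n_i} ℤ[A^{r_{i,j}}] for natural numbers n_i, r_{i,j}, equipped with a natural transformation ε : F₀ → Id such that for every abelian group A the augmented complex ⋯ → F₁(A) → F₀(A) → A → 0 is exact. Then for every integer n, the two endomorphisms of the chain complex F given by (a) multiplication by n on each term F_i(A), and (b) the chain map F([n]) induced via functoriality by the multiplication-by-n endomorphism of A, are chain homotopic via a homotopy h_i : F_i → F_{i+1} consisting of natural transformations (i.e. the homotopy is functorial in A). -/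

import Mathlib

/-!
STATEMENT 16: For a functorial Breen–Deligne-type resolution `F` of abelian groups, and any
integer `n`, the chain endomorphisms of `F` given by multiplication by `n` on each term and by
functoriality from the multiplication-by-`n` map of `A` are chain homotopic via a functorial
homotopy.
-/

universe u

open CategoryTheory Limits

/-- The functor `X ↦ X^r` on types. -/
def powFunctor (r : ℕ) : Type u ⥤ Type u where
  obj X := Fin r → X
  map f := TypeCat.ofHom (fun g => f ∘ g)

/-- The functor `A ↦ ℤ[A^r]` from abelian groups to abelian groups. -/
noncomputable def freePow (r : ℕ) : AddCommGrpCat.{u} ⥤ AddCommGrpCat.{u} :=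
  forget AddCommGrpCat ⋙ powFunctor r ⋙ AddCommGrpCat.free

noncomputable instance : HasFiniteBiproducts (AddCommGrpCat.{u} ⥤ AddCommGrpCat.{u}) :=
  HasFiniteBiproducts.of_hasFiniteProducts

/-- The natural endomorphism of a functor `G : Ab ⥤ Ab` induced via functoriality by the
multiplication-by-`n` endomorphism of each abelian group `A`. -/
def mapZsmul (n : ℤ) (G : AddCommGrpCat.{u} ⥤ AddCommGrpCat.{u}) : G ⟶ G where
  app A := G.map (n • 𝟙 A)
  naturality A B f := by
    rw [← G.map_comp, ← G.map_comp]
    congr 1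
    simp

namespace BDaux

abbrev Zr (r : ℕ) : AddCommGrpCat.{u} := AddCommGrpCat.of (Fin r → ULift.{u} ℤ)

def gen (r : ℕ) : Fin r → (Fin r → ULift.{u} ℤ) := fun j k => if k = j then ⟨1⟩ else ⟨0⟩

noncomputable def genElt (r : ℕ) : (freePow.{u} r).obj (Zr r) :=
  FreeAbelianGroup.of (gen r)

def chi {r : ℕ} {A : AddCommGrpCat.{u}} (x : Fin r → A) : Zr r ⟶ A :=
  AddCommGrpCat.ofHom
    { toFun := fun v => ∑ j, (v j).down • x j
      map_zero' := by simp
      map_add' := fun v w => by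
        simp [add_smul, Finset.sum_add_distrib] }

lemma chi_gen {r : ℕ} {A : AddCommGrpCat.{u}} (x : Fin r → A) (j : Fin r) :
    chi x (gen r j) = x j := by
  show ∑ k, (gen r j k).down • x k = x j
  rw [Finset.sum_eq_single j] <;> simp +contextual [gen]

lemma chi_gen_id (r : ℕ) : chi (gen r) = 𝟙 (Zr r) := by
  refine AddCommGrpCat.hom_ext (AddMonoidHom.ext fun v => ?_)
  show (∑ j, (v j).down • gen r j) = v
  funext k
  rw [Finset.sum_apply, Finset.sum_eq_single k]
  · simp [gen, ULift.ext_iff]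
  · intro b _ hb
    simp [gen, (Ne.symm hb : ¬ k = b), ULift.ext_iff]
  · simp

lemma hom_ext_of {X : Type u} {B : AddCommGrpCat.{u}} (f g : AddCommGrpCat.free.{u}.obj X ⟶ B)
    (h : ∀ x, f (FreeAbelianGroup.of x) = g (FreeAbelianGroup.of x)) : f = g :=
  AddCommGrpCat.hom_ext (FreeAbelianGroup.lift_ext _ _ h)

lemma chi_natural {r : ℕ} {A B : AddCommGrpCat.{u}} (f : A ⟶ B) (x : Fin r → A) :
    chi x ≫ f = chi (fun j => f (x j)) := by
  refine AddCommGrpCat.hom_ext (AddMonoidHom.ext fun v => ?_)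
  show f (∑ j, (v j).down • x j) = ∑ j, (v j).down • f (x j)
  simp [map_sum]

lemma freePow_map_of {r : ℕ} {A B : AddCommGrpCat.{u}} (f : A ⟶ B) (x : Fin r → A) :
    (freePow.{u} r).map f (FreeAbelianGroup.of x) = FreeAbelianGroup.of (fun j => f (x j)) := by
  show FreeAbelianGroup.map _ (FreeAbelianGroup.of x) = _
  erw [FreeAbelianGroup.map_of_apply]
  rfl

noncomputable def ofElt {r : ℕ} {G : AddCommGrpCat.{u} ⥤ AddCommGrpCat.{u}} (g : G.obj (Zr r)) :
    freePow.{u} r ⟶ G where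
  app A := AddCommGrpCat.ofHom (FreeAbelianGroup.lift (fun x : Fin r → A => G.map (chi x) g))
  naturality A B f := by
    refine hom_ext_of _ _ fun x => ?_
    erw [CategoryTheory.comp_apply, CategoryTheory.comp_apply]
    erw [freePow_map_of]
    erw [FreeAbelianGroup.lift_apply_of, FreeAbelianGroup.lift_apply_of]
    erw [← chi_natural, G.map_comp]
    rfl

lemma ofElt_of {r : ℕ} {G : AddCommGrpCat.{u} ⥤ AddCommGrpCat.{u}} (g : G.obj (Zr r))
    {A : AddCommGrpCat.{u}} (x : Fin r → A) :
    (ofElt g).app A (FreeAbelianGroup.of x) = G.map (chi x) g :=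
  FreeAbelianGroup.lift_apply_of _ _

lemma ofElt_gen {r : ℕ} {G : AddCommGrpCat.{u} ⥤ AddCommGrpCat.{u}} (g : G.obj (Zr r)) :
    (ofElt g).app (Zr r) (genElt r) = g := by
  rw [genElt, ofElt_of, chi_gen_id, G.map_id]
  rfl

lemma freePow_hom_ext {r : ℕ} {G : AddCommGrpCat.{u} ⥤ AddCommGrpCat.{u}}
    (α β : freePow.{u} r ⟶ G)
    (h : α.app (Zr r) (genElt r) = β.app (Zr r) (genElt r)) : α = β := by
  ext A : 2
  refine hom_ext_of _ _ fun x => ?_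
  have hx : (freePow.{u} r).map (chi x) (genElt r) = FreeAbelianGroup.of x := by
    rw [genElt, freePow_map_of]
    congr 1
    funext j
    exact chi_gen x j
  have key : ∀ γ : freePow.{u} r ⟶ G,
      γ.app A (FreeAbelianGroup.of x) = G.map (chi x) (γ.app (Zr r) (genElt r)) := by
    intro γ
    have h1 := congrArg (fun (f : (freePow.{u} r).obj (Zr r) ⟶ G.obj A) => f (genElt r))
      (γ.naturality (chi x))
    beta_reduce at h1
    erw [CategoryTheory.comp_apply, CategoryTheory.comp_apply] at h1
    rw [hx] at h1
    exact h1
  exact (key α).trans (h ▸ (key β).symm)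

lemma lift_free {r : ℕ} {G H : AddCommGrpCat.{u} ⥤ AddCommGrpCat.{u}} (τ : G ⟶ H)
    (α : freePow.{u} r ⟶ H)
    (h : α.app (Zr r) (genElt r) ∈ Set.range (τ.app (Zr r))) :
    ∃ β : freePow.{u} r ⟶ G, β ≫ τ = α := by
  obtain ⟨g, hg⟩ := h
  refine ⟨ofElt g, freePow_hom_ext _ _ ?_⟩
  show τ.app (Zr r) ((ofElt g).app (Zr r) (genElt r)) = _
  rw [ofElt_gen, hg]

lemma lift_biprod {k : ℕ} (r : Fin k → ℕ) {P G H : AddCommGrpCat.{u} ⥤ AddCommGrpCat.{u}}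
    (e : P ≅ ⨁ fun j => freePow.{u} (r j)) (τ : G ⟶ H) (α : P ⟶ H)
    (h : ∀ (A : AddCommGrpCat.{u}) (x : P.obj A), α.app A x ∈ Set.range (τ.app A)) :
    ∃ β : P ⟶ G, β ≫ τ = α := by
  have hj : ∀ j : Fin k, ∃ β : freePow.{u} (r j) ⟶ G,
      β ≫ τ = biproduct.ι (fun j => freePow.{u} (r j)) j ≫ e.inv ≫ α := by
    intro j
    apply lift_free
    exact h _ _
  choose β hβ using hj
  refine ⟨e.hom ≫ biproduct.desc β, ?_⟩
  have hd : biproduct.desc β ≫ τ = e.inv ≫ α := by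
    refine biproduct.hom_ext' _ _ fun j => ?_
    rw [biproduct.ι_desc_assoc, hβ]
  rw [Category.assoc, hd, Iso.hom_inv_id_assoc]

end BDaux

namespace BDaux

lemma mapZsmul_naturality (m : ℤ) {G H : AddCommGrpCat.{u} ⥤ AddCommGrpCat.{u}} (τ : G ⟶ H) :
    mapZsmul m G ≫ τ = τ ≫ mapZsmul m H := by
  apply NatTrans.ext
  funext A
  exact τ.naturality (m • 𝟙 A)

lemma mapZsmul_id (m : ℤ) : mapZsmul m (𝟭 AddCommGrpCat.{u}) = m • 𝟙 (𝟭 AddCommGrpCat.{u}) := by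
  apply NatTrans.ext
  funext A
  show (𝟭 AddCommGrpCat.{u}).map (m • 𝟙 A) = (m • 𝟙 (𝟭 AddCommGrpCat.{u})).app A
  simp

lemma app_app_zero {G H : AddCommGrpCat.{u} ⥤ AddCommGrpCat.{u}} {γ : G ⟶ H}
    (h : γ = 0) (A : AddCommGrpCat.{u}) (x : G.obj A) : γ.app A x = 0 := by
  rw [h]
  show (0 : G.obj A ⟶ H.obj A) x = 0
  simp

lemma comp_app_apply {G H K : AddCommGrpCat.{u} ⥤ AddCommGrpCat.{u}} (σ : G ⟶ H) (τ : H ⟶ K)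
    (A : AddCommGrpCat.{u}) (x : G.obj A) : (σ ≫ τ).app A x = τ.app A (σ.app A x) := rfl

end BDaux

open BDaux in
theorem breen_deligne_mul_homotopy
    (n : ℕ → ℕ) (r : ∀ i, Fin (n i) → ℕ)
    (F : ChainComplex (AddCommGrpCat.{u} ⥤ AddCommGrpCat.{u}) ℕ)
    (iso : ∀ i, F.X i ≅ ⨁ fun j => freePow.{u} (r i j))
    (ε : F.X 0 ⟶ 𝟭 AddCommGrpCat.{u})
    (hexact : ∀ A : AddCommGrpCat.{u},
      Function.Surjective (ε.app A) ∧
      Set.range ((F.d 1 0).app A) = {x | (ε.app A) x = 0} ∧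
      ∀ i : ℕ, Set.range ((F.d (i + 2) (i + 1)).app A) =
        {x | ((F.d (i + 1) i).app A) x = 0})
    (m : ℤ) :
    ∃ (φ ψ : F ⟶ F),
      (∀ i, φ.f i = m • 𝟙 (F.X i)) ∧
      (∀ i, ψ.f i = mapZsmul m (F.X i)) ∧
      Nonempty (Homotopy φ ψ) := by
  classical
  refine ⟨{ f := fun i => m • 𝟙 (F.X i), comm' := fun i j _ => by simp },
    { f := fun i => mapZsmul m (F.X i), comm' := fun i j _ => mapZsmul_naturality m (F.d i j) },
    fun i => rfl, fun i => rfl, ?_⟩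
  set φ : F ⟶ F := { f := fun i => m • 𝟙 (F.X i), comm' := fun i j _ => by simp } with hφ
  set ψ : F ⟶ F :=
    { f := fun i => mapZsmul m (F.X i), comm' := fun i j _ => mapZsmul_naturality m (F.d i j) }
    with hψ
  set e : F ⟶ F := φ - ψ with he
  -- lifting steps
  have step : ∀ (i : ℕ) (g : F.X (i + 1) ⟶ F.X (i + 1)), g ≫ F.d (i + 1) i = 0 →
      ∃ h : F.X (i + 1) ⟶ F.X (i + 2), h ≫ F.d (i + 2) (i + 1) = g := by
    intro i g hg
    apply lift_biprod (r (i + 1)) (iso (i + 1))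
    intro A x
    rw [(hexact A).2.2 i]
    show (F.d (i + 1) i).app A (g.app A x) = 0
    rw [← comp_app_apply]
    exact app_app_zero hg A x
  have step0 : ∀ g : F.X 0 ⟶ F.X 0, g ≫ ε = 0 →
      ∃ h : F.X 0 ⟶ F.X 1, h ≫ F.d 1 0 = g := by
    intro g hg
    apply lift_biprod (r 0) (iso 0)
    intro A x
    rw [(hexact A).2.1]
    show ε.app A (g.app A x) = 0
    rw [← comp_app_apply]
    exact app_app_zero hg A x
  have hef : ∀ i, e.f i = m • 𝟙 (F.X i) - mapZsmul m (F.X i) := fun i => by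
    rw [he, HomologicalComplex.sub_f_apply]
  -- base : e.f 0 ≫ ε = 0
  have hc0 : e.f 0 ≫ ε = 0 := by
    rw [hef 0, Preadditive.sub_comp, Preadditive.zsmul_comp, Category.id_comp,
      mapZsmul_naturality, mapZsmul_id]
    simp
  obtain ⟨h0, hh0⟩ := step0 (e.f 0) hc0
  -- one
  have hc1 : (e.f 1 - F.d 1 0 ≫ h0) ≫ F.d 1 0 = 0 := by
    rw [Preadditive.sub_comp, e.comm 1 0, Category.assoc, hh0, sub_self]
  obtain ⟨h1, hh1⟩ := step 0 _ hc1
  -- homotopy via mkInductive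
  refine ⟨(Homotopy.equivSubZero).symm ?_⟩
  have hh1' : h1 ≫ F.d 2 1 = e.f 1 - F.d 1 0 ≫ h0 := hh1
  refine Homotopy.mkInductive e h0 hh0.symm h1 ?_ ?_
  · rw [hh1']
    abel
  · intro i p
    obtain ⟨f, f', hf⟩ := p
    have hc : (e.f (i + 2) - F.d (i + 2) (i + 1) ≫ f') ≫ F.d (i + 2) (i + 1) = 0 := by
      rw [Preadditive.sub_comp, e.comm (i + 2) (i + 1), hf, Preadditive.comp_add,
        ← Category.assoc, ← Category.assoc, F.d_comp_d]
      simp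
    have hstep := step (i + 1) _ hc
    refine ⟨hstep.choose, ?_⟩
    have hh2 : hstep.choose ≫ F.d (i + 3) (i + 2) = e.f (i + 2) - F.d (i + 2) (i + 1) ≫ f' :=
      hstep.choose_spec
    rw [hh2]
    abel
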